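/- The limit inferior, as n → ∞, of ‖T_n‖/√n is at least 1, where ‖·‖ denotes the ℓ²-operator norm. -/

import Mathlib

open Matrix

noncomputable section

/-- `Sn n` is the set of largest representatives of the finite classes of the
equivalence relation `i ~ j ↔ n / i = n / j` on positive integers. -/
def Sn (n : ℕ) : Finset ℕ := (Finset.Icc 1 n).filter (fun k => n / (k + 1) < n / k)

/-- The matrix `T_n` over `ℝ`, indexed by `S_n`. -/
def Tmat (n : ℕ) : Matrix (Sn n) (Sn n) ℝ :=
  fun k l => if (k : ℕ) * (l : ℕ) ≤ n then 1 else 0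

/-- The ℓ²-operator norm of a real square matrix. -/
def opNorm {m : Type*} [Fintype m] [DecidableEq m] (A : Matrix m m ℝ) : ℝ :=
  ‖Matrix.toEuclideanCLM (𝕜 := ℝ) A‖

lemma mem_Sn {n k : ℕ} (hk : 1 ≤ k) (h : k * (k + 1) ≤ n) : k ∈ Sn n := by
  have hkn : k ≤ n := le_trans (Nat.le_mul_of_pos_right k (by omega)) h
  refine Finset.mem_filter.2 ⟨Finset.mem_Icc.2 ⟨hk, hkn⟩, ?_⟩
  set q := n / (k + 1) with hq
  have hq1 : k ≤ q := (Nat.le_div_iff_mul_le (by omega)).2 h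
  have hq2 : q * (k + 1) ≤ n := Nat.div_mul_le_self n (k + 1)
  have : (q + 1) * k ≤ n := by nlinarith
  have : q + 1 ≤ n / k := (Nat.le_div_iff_mul_le (by omega)).2 this
  omega

/-- every `1 ≤ k ≤ Nat.sqrt n - 1` is in `Sn n`, and then the all-ones
submatrix gives the lower bound `Nat.sqrt n - 1 ≤ opNorm (Tmat n)`. -/
lemma norm_lower (n : ℕ) : ((Nat.sqrt n - 1 : ℕ) : ℝ) ≤ opNorm (Tmat n) := by
  set m : ℕ := Nat.sqrt n - 1 with hm
  rcases Nat.eq_zero_or_pos m with h0 | hmpos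
  · rw [h0, Nat.cast_zero]; unfold opNorm; exact norm_nonneg _
  have hs1 : 1 ≤ Nat.sqrt n := by omega
  have hmem : ∀ k : ℕ, 1 ≤ k → k ≤ m → k ∈ Sn n := by
    intro k h1 h2
    refine mem_Sn h1 ?_
    have : k * (k + 1) ≤ m * (m + 1) := Nat.mul_le_mul h2 (by omega)
    have h3 : m * (m + 1) ≤ Nat.sqrt n * Nat.sqrt n := by
      have : m + 1 = Nat.sqrt n := by omega
      nlinarith [this]
    exact le_trans this (le_trans h3 (Nat.sqrt_le n))
  have hmuln : ∀ k l : ℕ, k ≤ m → l ≤ m → k * l ≤ n := by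
    intro k l hk hl
    calc k * l ≤ Nat.sqrt n * Nat.sqrt n := Nat.mul_le_mul (by omega) (by omega)
    _ ≤ n := Nat.sqrt_le n
  -- test vector
  set x : (Sn n) → ℝ := fun k => if (k : ℕ) ≤ m then 1 else 0 with hx
  set v : EuclideanSpace ℝ (Sn n) := (WithLp.equiv 2 _).symm x with hv
  set C := Matrix.toEuclideanCLM (𝕜 := ℝ) (Tmat n) with hC
  -- the filtered set
  have hfilt : (Sn n).filter (fun k => k ≤ m) = Finset.Icc 1 m := by
    ext k
    simp only [Finset.mem_filter, Finset.mem_Icc]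
    constructor
    · rintro ⟨hk, h2⟩
      have := (Finset.mem_filter.1 hk).1
      exact ⟨(Finset.mem_Icc.1 this).1, h2⟩
    · rintro ⟨h1, h2⟩
      exact ⟨hmem k h1 h2, h2⟩
  have hsum : (∑ k : (Sn n), x k) = (m : ℝ) := by
    rw [hx]
    rw [Finset.sum_coe_sort (Sn n) (fun k => if (k : ℕ) ≤ m then (1:ℝ) else 0)]
    rw [← Finset.sum_filter, hfilt]
    simp
  -- v k = x k
  have hveq : ∀ k : (Sn n), v k = x k := fun k => rfl
  have hCv : C v = (WithLp.equiv 2 _).symm ((Tmat n) *ᵥ x) := by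
    rw [hC, hv]
    rfl
  have hCvk : ∀ k : (Sn n), C v k = ∑ l : (Sn n), Tmat n k l * x l := by
    intro k; rw [hCv]; rfl
  -- inner product computation
  have hterm : ∀ k l : (Sn n), x k * (Tmat n k l * x l) = x k * x l := by
    intro k l
    by_cases hk : (k : ℕ) ≤ m
    · by_cases hl : (l : ℕ) ≤ m
      · have : Tmat n k l = 1 := by
          simp [Tmat, hmuln _ _ hk hl]
        rw [this, one_mul]
      · simp [hx, hl]
    · simp [hx, hk]
  have hinner : (inner ℝ v (C v) : ℝ) = (m : ℝ) * (m : ℝ) := by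
    rw [PiLp.inner_apply]
    simp only [RCLike.inner_apply, conj_trivial]
    rw [Finset.sum_congr rfl fun k _ => mul_comm (C v k) (v k)]
    calc (∑ k : (Sn n), v k * C v k)
        = ∑ k : (Sn n), ∑ l : (Sn n), x k * (Tmat n k l * x l) := by
          refine Finset.sum_congr rfl fun k _ => ?_
          rw [hveq, hCvk, Finset.mul_sum]
      _ = ∑ k : (Sn n), ∑ l : (Sn n), x k * x l := by
          refine Finset.sum_congr rfl fun k _ => Finset.sum_congr rfl fun l _ => hterm k l
      _ = (∑ k : (Sn n), x k) * (∑ l : (Sn n), x l) := by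
          rw [Finset.sum_mul_sum]
      _ = (m : ℝ) * (m : ℝ) := by rw [hsum]
  have hnormv : ‖v‖ * ‖v‖ = (m : ℝ) := by
    rw [← real_inner_self_eq_norm_mul_norm]
    rw [PiLp.inner_apply]
    simp only [RCLike.inner_apply, conj_trivial]
    calc (∑ k : (Sn n), v k * v k) = ∑ k : (Sn n), x k := by
          refine Finset.sum_congr rfl fun k _ => ?_
          rw [hveq]
          by_cases hk : (k : ℕ) ≤ m <;> simp [hx, hk]
      _ = (m : ℝ) := hsum
  -- Cauchy-Schwarz
  have hcs : (m : ℝ) * (m : ℝ) ≤ ‖C‖ * ((m : ℝ)) := by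
    calc (m : ℝ) * (m : ℝ) = inner ℝ v (C v) := hinner.symm
      _ ≤ ‖v‖ * ‖C v‖ := real_inner_le_norm v (C v)
      _ ≤ ‖v‖ * (‖C‖ * ‖v‖) := by
          apply mul_le_mul_of_nonneg_left (C.le_opNorm v) (norm_nonneg v)
      _ = ‖C‖ * (‖v‖ * ‖v‖) := by ring
      _ = ‖C‖ * (m : ℝ) := by rw [hnormv]
  have hmp : (0 : ℝ) < (m : ℝ) := by exact_mod_cast hmpos
  have : (m : ℝ) ≤ ‖C‖ := by
    have := (mul_le_mul_iff_of_pos_right hmp).1 (by linarith [hcs] : (m:ℝ) * (m:ℝ) ≤ ‖C‖ * (m:ℝ))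
    exact this
  unfold opNorm
  exact this


lemma card_Sn_le (n : ℕ) : (Sn n).card ≤ 2 * Nat.sqrt n + 1 := by
  set s := Nat.sqrt n with hs
  classical
  have hsplit := Finset.filter_union_filter_not_eq (fun k => k ≤ s) (Sn n)
  have h1 : ((Sn n).filter (fun k => k ≤ s)).card ≤ s := by
    have hsub : (Sn n).filter (fun k => k ≤ s) ⊆ Finset.Icc 1 s := by
      intro k hk
      rcases Finset.mem_filter.1 hk with ⟨hk1, hk2⟩
      have := (Finset.mem_Icc.1 (Finset.mem_filter.1 hk1).1).1
      exact Finset.mem_Icc.2 ⟨this, hk2⟩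
    calc ((Sn n).filter (fun k => k ≤ s)).card ≤ (Finset.Icc 1 s).card :=
          Finset.card_le_card hsub
      _ = s := by simp
  have h2 : ((Sn n).filter (fun k => ¬ k ≤ s)).card ≤ s + 1 := by
    have hmaps : ∀ k ∈ (Sn n).filter (fun k => ¬ k ≤ s), n / k ∈ Finset.Icc 0 s := by
      intro k hk
      rcases Finset.mem_filter.1 hk with ⟨_, hk2⟩
      have hks : s + 1 ≤ k := by omega
      have hd1 : n / k ≤ n / (s + 1) := Nat.div_le_div_left hks (by omega)
      have hd2 : n / (s + 1) < s + 1 := by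
        rw [Nat.div_lt_iff_lt_mul (by omega)]
        exact Nat.lt_succ_sqrt n
      exact Finset.mem_Icc.2 ⟨Nat.zero_le _, by omega⟩
    have hinj : ∀ k₁ ∈ (Sn n).filter (fun k => ¬ k ≤ s),
        ∀ k₂ ∈ (Sn n).filter (fun k => ¬ k ≤ s), n / k₁ = n / k₂ → k₁ = k₂ := by
      have key : ∀ k₁ k₂ : ℕ, k₁ ∈ Sn n → k₂ ∈ Sn n → k₁ < k₂ → n / k₂ < n / k₁ := by
        intro k₁ k₂ h₁ h₂ hlt
        rcases Finset.mem_filter.1 h₁ with ⟨hI, hd⟩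
        have hk1 : 1 ≤ k₁ := (Finset.mem_Icc.1 hI).1
        have : n / k₂ ≤ n / (k₁ + 1) := Nat.div_le_div_left (by omega) (by omega)
        omega
      intro k₁ h₁ k₂ h₂ heq
      rcases Finset.mem_filter.1 h₁ with ⟨h₁', _⟩
      rcases Finset.mem_filter.1 h₂ with ⟨h₂', _⟩
      rcases lt_trichotomy k₁ k₂ with h | h | h
      · have := key k₁ k₂ h₁' h₂' h; omega
      · exact h
      · have := key k₂ k₁ h₂' h₁' h; omega
    have := Finset.card_le_card_of_injOn (fun k => n / k) hmaps
      (fun k₁ h₁ k₂ h₂ h => hinj k₁ h₁ k₂ h₂ h)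
    simpa using this
  calc (Sn n).card
      = ((Sn n).filter (fun k => k ≤ s) ∪ (Sn n).filter (fun k => ¬ k ≤ s)).card := by
        rw [hsplit]
    _ ≤ ((Sn n).filter (fun k => k ≤ s)).card + ((Sn n).filter (fun k => ¬ k ≤ s)).card :=
        Finset.card_union_le _ _
    _ ≤ 2 * s + 1 := by omega

lemma norm_upper (n : ℕ) : opNorm (Tmat n) ≤ ((Sn n).card : ℝ) := by
  unfold opNorm
  apply ContinuousLinearMap.opNorm_le_bound _ (by positivity)
  intro v
  set C := Matrix.toEuclideanCLM (𝕜 := ℝ) (Tmat n) with hC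
  set c : ℝ := ((Sn n).card : ℝ) with hc
  have hc0 : (0:ℝ) ≤ c := by positivity
  have hCvk : ∀ k : (Sn n), C v k = ∑ l : (Sn n), Tmat n k l * v l := by
    intro k; rfl
  have hsq : ∀ k : (Sn n), (C v k) ^ 2 ≤ c * ∑ l : (Sn n), (v l) ^ 2 := by
    intro k
    rw [hCvk]
    calc (∑ l : (Sn n), Tmat n k l * v l) ^ 2
        ≤ ((Finset.univ : Finset (Sn n)).card : ℝ) * ∑ l : (Sn n), (Tmat n k l * v l) ^ 2 := by
          exact_mod_cast sq_sum_le_card_mul_sum_sq (s := (Finset.univ : Finset (Sn n)))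
            (f := fun l => Tmat n k l * v l)
      _ ≤ c * ∑ l : (Sn n), (v l) ^ 2 := by
          have h1 : (((Finset.univ : Finset (Sn n)).card : ℕ) : ℝ) = c := by
            rw [hc, Finset.card_univ, Fintype.card_coe]
          rw [h1]
          apply mul_le_mul_of_nonneg_left _ hc0
          apply Finset.sum_le_sum
          intro l _
          rw [mul_pow]
          have : (Tmat n k l) ^ 2 ≤ 1 := by
            by_cases h : ((k:ℕ) * (l:ℕ) ≤ n) <;> simp [Tmat, h]
          nlinarith [sq_nonneg (v l)]
  have hv2 : ∀ w : EuclideanSpace ℝ (Sn n), ‖w‖ = Real.sqrt (∑ k : (Sn n), (w k) ^ 2) := by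
    intro w
    rw [EuclideanSpace.norm_eq]
    congr 1
    refine Finset.sum_congr rfl fun k _ => ?_
    rw [Real.norm_eq_abs, sq_abs]
  rw [hv2 (C v), hv2 v]
  rw [← Real.sqrt_sq hc0, ← Real.sqrt_mul (by positivity)]
  apply Real.sqrt_le_sqrt
  calc (∑ k : (Sn n), (C v k) ^ 2) ≤ ∑ _k : (Sn n), (c * ∑ l : (Sn n), (v l) ^ 2) :=
        Finset.sum_le_sum fun k _ => hsq k
    _ = (((Finset.univ : Finset (Sn n)).card : ℕ) : ℝ) * (c * ∑ l : (Sn n), (v l) ^ 2) := by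
        rw [Finset.sum_const, nsmul_eq_mul]
    _ = c ^ 2 * ∑ l : (Sn n), (v l) ^ 2 := by
        have h1 : (((Finset.univ : Finset (Sn n)).card : ℕ) : ℝ) = c := by
          rw [hc, Finset.card_univ, Fintype.card_coe]
        rw [h1]; ring

theorem stmt3 :
    1 ≤ Filter.liminf (fun n : ℕ => opNorm (Tmat n) / Real.sqrt n) Filter.atTop := by
  set f : ℕ → ℝ := fun n => opNorm (Tmat n) / Real.sqrt n with hf
  set g : ℕ → ℝ := fun n => 1 - 2 / Real.sqrt n with hg
  have hgt : Filter.Tendsto g Filter.atTop (nhds 1) := by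
    have hsq : Filter.Tendsto (fun n : ℕ => Real.sqrt n) Filter.atTop Filter.atTop := by
      apply Filter.tendsto_atTop_atTop.2
      intro b
      refine ⟨⌈b ^ 2⌉₊, fun n hn => ?_⟩
      by_cases hb : 0 ≤ b
      · have hb2 : b ^ 2 ≤ (n : ℝ) := le_trans (Nat.le_ceil _) (by exact_mod_cast hn)
        calc b = Real.sqrt (b ^ 2) := (Real.sqrt_sq hb).symm
          _ ≤ Real.sqrt n := Real.sqrt_le_sqrt hb2
      · exact le_trans (le_of_not_ge hb) (Real.sqrt_nonneg _)
    have h2 : Filter.Tendsto (fun n : ℕ => 2 / Real.sqrt n) Filter.atTop (nhds 0) :=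
      Filter.Tendsto.div_atTop tendsto_const_nhds hsq
    have := Filter.Tendsto.sub (tendsto_const_nhds (x := (1:ℝ))) h2
    simpa using this
  have hle : ∀ᶠ n in Filter.atTop, g n ≤ f n := by
    filter_upwards [Filter.eventually_ge_atTop 1] with n hn
    have hsp : (0 : ℝ) < Real.sqrt n := Real.sqrt_pos.2 (by exact_mod_cast hn)
    have hkey : Real.sqrt n - 2 ≤ ((Nat.sqrt n - 1 : ℕ) : ℝ) := by
      have h1 : Real.sqrt n < (Nat.sqrt n : ℝ) + 1 := by
        have : (n : ℝ) < ((Nat.sqrt n : ℝ) + 1) ^ 2 := by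
          exact_mod_cast Nat.lt_succ_sqrt' n
        nlinarith [Real.sq_sqrt (by positivity : (0:ℝ) ≤ (n:ℝ)),
          Real.sqrt_nonneg (n : ℝ)]
      have h2 : 1 ≤ Nat.sqrt n := by
        have := Nat.sqrt_le_sqrt hn
        simpa using this
      have : ((Nat.sqrt n - 1 : ℕ) : ℝ) = (Nat.sqrt n : ℝ) - 1 := by
        have : (Nat.sqrt n - 1) + 1 = Nat.sqrt n := by omega
        push_cast [Nat.cast_sub h2]
        ring
      rw [this]
      linarith
    have hlow := norm_lower n
    have : Real.sqrt n - 2 ≤ opNorm (Tmat n) := le_trans hkey hlow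
    show 1 - 2 / Real.sqrt n ≤ opNorm (Tmat n) / Real.sqrt n
    calc 1 - 2 / Real.sqrt n = (Real.sqrt n - 2) / Real.sqrt n := by
          rw [sub_div, div_self (ne_of_gt hsp)]
      _ ≤ opNorm (Tmat n) / Real.sqrt n := by
          gcongr
  have hbddg : Filter.IsBoundedUnder (· ≥ ·) Filter.atTop g := by
    apply Filter.isBoundedUnder_of
    refine ⟨-1, fun n => ?_⟩
    show -1 ≤ g n
    rcases Nat.eq_zero_or_pos n with h | h
    · simp [hg, h]
    · have h1 : (1:ℝ) ≤ Real.sqrt n := by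
        rw [show (1:ℝ) = Real.sqrt 1 by simp]
        exact Real.sqrt_le_sqrt (by exact_mod_cast h)
      have : 2 / Real.sqrt n ≤ 2 := by
        rw [div_le_iff₀ (by linarith)]
        linarith
      simp only [hg]
      linarith
  have hcobf : Filter.IsCoboundedUnder (· ≥ ·) Filter.atTop f := by
    apply Filter.isCoboundedUnder_ge_of_eventually_le Filter.atTop (x := 3)
    filter_upwards [Filter.eventually_ge_atTop 1] with n hn
    have hsp : (0 : ℝ) < Real.sqrt n := Real.sqrt_pos.2 (by exact_mod_cast hn)
    have h1 : (1:ℝ) ≤ Real.sqrt n := by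
      rw [show (1:ℝ) = Real.sqrt 1 by simp]
      exact Real.sqrt_le_sqrt (by exact_mod_cast hn)
    have hcard : ((Sn n).card : ℝ) ≤ 2 * Real.sqrt n + 1 := by
      have h2 : ((Sn n).card : ℝ) ≤ 2 * (Nat.sqrt n : ℝ) + 1 := by
        exact_mod_cast card_Sn_le n
      have h3 : (Nat.sqrt n : ℝ) ≤ Real.sqrt n := by
        rw [show ((Nat.sqrt n : ℕ) : ℝ) = Real.sqrt ((Nat.sqrt n : ℝ) ^ 2) by
          rw [Real.sqrt_sq (by positivity)]]
        apply Real.sqrt_le_sqrt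
        exact_mod_cast Nat.sqrt_le' n
      linarith
    have hup : opNorm (Tmat n) ≤ 3 * Real.sqrt n :=
      le_trans (norm_upper n) (by linarith)
    show f n ≤ 3
    rw [hf]
    simp only
    rw [div_le_iff₀ hsp]
    linarith
  calc (1 : ℝ) = Filter.liminf g Filter.atTop := (hgt.liminf_eq).symm
    _ ≤ Filter.liminf f Filter.atTop := Filter.liminf_le_liminf hle hbddg hcobf
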